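/- arXiv:1212.1525 — 7 statements merged into one kernel-verified Lean document; each statement's English description precedes it below -/
import Mathlib

section
/- Let n be a positive integer, B a symmetric n×n real matrix, g ∈ ℝⁿ, and δ > 0. Suppose p* ∈ ℝⁿ satisfies ‖p*‖₂ ≤ δ and there exists σ* ≥ 0 such that B + σ*I is positive semidefinite, (B + σ*I)p* = -g, and σ*(δ - ‖p*‖₂) = 0. Then p* is a global minimizer of q(p) = gᵀp + (1/2)pᵀBp over the set {p ∈ ℝⁿ : ‖p‖₂ ≤ δ} (sufficiency direction of the Moré–Sorensen optimality conditions). -/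
open Matrix

/-- Sufficiency direction of the Moré–Sorensen optimality conditions for the
trust-region subproblem: if `‖p⋆‖ ≤ δ` and there is `σ⋆ ≥ 0` with `B + σ⋆I`
positive semidefinite, `(B + σ⋆I)p⋆ = -g` and `σ⋆(δ - ‖p⋆‖) = 0`, then `p⋆`
globally minimizes `q(p) = gᵀp + (1/2)pᵀBp` over `{p : ‖p‖₂ ≤ δ}`. -/
theorem mss_stmt0 (n : ℕ) (hn : 0 < n)
    (B : Matrix (Fin n) (Fin n) ℝ) (hB : B.IsSymm)
    (g : EuclideanSpace ℝ (Fin n)) (δ : ℝ) (hδ : 0 < δ)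
    (pstar : EuclideanSpace ℝ (Fin n)) (σ : ℝ) (hσ : 0 ≤ σ)
    (hfeas : ‖pstar‖ ≤ δ)
    (hpsd : (B + σ • 1).PosSemidef)
    (heq : (B + σ • 1).mulVec pstar = -g)
    (hcomp : σ * (δ - ‖pstar‖) = 0) :
    ∀ p : EuclideanSpace ℝ (Fin n), ‖p‖ ≤ δ →
      g ⬝ᵥ pstar + (1 / 2) * (pstar ⬝ᵥ B.mulVec pstar) ≤
        g ⬝ᵥ p + (1 / 2) * (p ⬝ᵥ B.mulVec p) := by
  intro p hp
  set A : Matrix (Fin n) (Fin n) ℝ := B + σ • 1 with hA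
  have hAsymm : Aᵀ = A := by
    have : Bᵀ = B := hB
    simp [hA, Matrix.transpose_add, Matrix.transpose_smul, this]
  -- dot product with A
  have hnormsq : ∀ x : EuclideanSpace ℝ (Fin n), x ⬝ᵥ x = ‖x‖ ^ 2 := by
    intro x
    rw [← real_inner_self_eq_norm_sq]
    simp [dotProduct, PiLp.inner_apply, RCLike.inner_apply, mul_comm]
    rw [EuclideanSpace.norm_eq, Real.sq_sqrt (by positivity)]
    simp [Real.norm_eq_abs, sq]
  have hAexp : ∀ x : Fin n → ℝ, x ⬝ᵥ A.mulVec x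
      = x ⬝ᵥ B.mulVec x + σ * (x ⬝ᵥ x) := by
    intro x
    simp [hA, Matrix.add_mulVec, Matrix.smul_mulVec, dotProduct_add,
      dotProduct_smul, smul_eq_mul]
  -- positive semidefiniteness of A at p - pstar
  have hkey : 0 ≤ ((p : Fin n → ℝ) - (pstar : Fin n → ℝ)) ⬝ᵥ
      A.mulVec ((p : Fin n → ℝ) - (pstar : Fin n → ℝ)) := by
    have := hpsd.dotProduct_mulVec_nonneg ((p : Fin n → ℝ) - (pstar : Fin n → ℝ))
    simpa using this
  -- expand: (p - p*) A (p - p*) = pAp - 2 p* A p + p* A p*, using symmetry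
  have hsym : ∀ x y : Fin n → ℝ, x ⬝ᵥ A.mulVec y = y ⬝ᵥ A.mulVec x := by
    intro x y
    rw [Matrix.dotProduct_mulVec, ← Matrix.mulVec_transpose, hAsymm,
      dotProduct_comm]
  have hexpand : ((p : Fin n → ℝ) - (pstar : Fin n → ℝ)) ⬝ᵥ
      A.mulVec ((p : Fin n → ℝ) - (pstar : Fin n → ℝ))
      = p ⬝ᵥ A.mulVec p - 2 * (pstar ⬝ᵥ A.mulVec p) + pstar ⬝ᵥ A.mulVec pstar := by
    have h1 : p ⬝ᵥ A.mulVec pstar = pstar ⬝ᵥ A.mulVec p := hsym p pstar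
    rw [Matrix.mulVec_sub, dotProduct_sub, sub_dotProduct, sub_dotProduct, h1]
    ring
  -- g ⬝ᵥ x = -(pstar ⬝ᵥ A.mulVec x)
  have hg : ∀ x : Fin n → ℝ, g ⬝ᵥ x = -(pstar ⬝ᵥ A.mulVec x) := by
    intro x
    have : g = -(A.mulVec pstar) := by rw [heq]; simp
    rw [this]
    rw [neg_dotProduct, Matrix.dotProduct_mulVec, ← Matrix.mulVec_transpose, hAsymm,
      dotProduct_comm]
  -- main inequality for quadratic with A
  have hmain : g ⬝ᵥ pstar + (1/2) * (pstar ⬝ᵥ A.mulVec pstar)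
      ≤ g ⬝ᵥ p + (1/2) * (p ⬝ᵥ A.mulVec p) := by
    have h1 := hkey
    rw [hexpand] at h1
    rw [hg p, hg pstar, hsym pstar pstar]
    nlinarith [h1]
  -- sigma term
  have hσterm : σ * (p ⬝ᵥ p) ≤ σ * (pstar ⬝ᵥ pstar) := by
    rcases mul_eq_zero.mp hcomp with h | h
    · simp [h]
    · have hps : ‖pstar‖ = δ := by linarith [sub_eq_zero.mp h]
      rw [hnormsq, hnormsq, hps]
      have hp0 : 0 ≤ ‖p‖ := norm_nonneg _
      have : ‖p‖ ^ 2 ≤ δ ^ 2 := by nlinarith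
      nlinarith
  rw [hAexp p, hAexp pstar] at hmain
  nlinarith [hmain, hσterm]
end

section
/- Let n be a positive integer, B a symmetric n×n real matrix, g ∈ ℝⁿ, and δ > 0. If p* ∈ ℝⁿ is a global minimizer of q(p) = gᵀp + (1/2)pᵀBp over the set {p ∈ ℝⁿ : ‖p‖₂ ≤ δ}, then ‖p*‖₂ ≤ δ and there exists σ* ≥ 0 such that B + σ*I is positive semidefinite, (B + σ*I)p* = -g, and σ*(δ - ‖p*‖₂) = 0 (necessity direction of the Moré–Sorensen optimality conditions). -/
open Matrix Filter Topology

set_option maxHeartbeats 4000000 in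
/-- Necessity direction of the Moré–Sorensen optimality conditions: if `p⋆` is a
global minimizer of `q(p) = gᵀp + (1/2)pᵀBp` over `{p : ‖p‖₂ ≤ δ}`, then
`‖p⋆‖ ≤ δ` and there exists `σ⋆ ≥ 0` such that `B + σ⋆I` is positive
semidefinite, `(B + σ⋆I)p⋆ = -g`, and `σ⋆(δ - ‖p⋆‖) = 0`. -/
theorem mss_stmt1 (n : ℕ) (hn : 0 < n)
    (B : Matrix (Fin n) (Fin n) ℝ) (hB : B.IsSymm)
    (g : EuclideanSpace ℝ (Fin n)) (δ : ℝ) (hδ : 0 < δ)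
    (pstar : EuclideanSpace ℝ (Fin n))
    (hfeas : ‖pstar‖ ≤ δ)
    (hmin : ∀ p : EuclideanSpace ℝ (Fin n), ‖p‖ ≤ δ →
      g ⬝ᵥ pstar + (1 / 2) * (pstar ⬝ᵥ B.mulVec pstar) ≤
        g ⬝ᵥ p + (1 / 2) * (p ⬝ᵥ B.mulVec p)) :
    ‖pstar‖ ≤ δ ∧ ∃ σ : ℝ, 0 ≤ σ ∧ (B + σ • 1).PosSemidef ∧
      (B + σ • 1).mulVec pstar = -g ∧ σ * (δ - ‖pstar‖) = 0 := by
  classical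
  refine ⟨hfeas, ?_⟩
  -- function-typed copies of the vectors
  obtain ⟨P, hPe⟩ : ∃ P : Fin n → ℝ, P = pstar := ⟨show Fin n → ℝ from pstar, rfl⟩
  obtain ⟨G, hGe⟩ : ∃ G : Fin n → ℝ, G = g := ⟨show Fin n → ℝ from g, rfl⟩
  -- basic dot-product facts
  have hds : ∀ x : Fin n → ℝ, 0 ≤ x ⬝ᵥ x := by
    intro x
    exact Finset.sum_nonneg fun i _ => mul_self_nonneg _
  have hnormsq : ∀ x : EuclideanSpace ℝ (Fin n), ‖x‖ ^ 2 = x ⬝ᵥ x := by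
    intro x
    rw [EuclideanSpace.norm_eq, Real.sq_sqrt (by positivity)]
    simp [dotProduct, Real.norm_eq_abs, sq_abs, sq]
  have hsymm : ∀ x y : Fin n → ℝ, x ⬝ᵥ B *ᵥ y = y ⬝ᵥ B *ᵥ x := by
    intro x y
    calc x ⬝ᵥ B *ᵥ y = x ᵥ* B ⬝ᵥ y := Matrix.dotProduct_mulVec _ _ _
      _ = (Bᵀ *ᵥ x) ⬝ᵥ y := by rw [Matrix.mulVec_transpose]
      _ = (B *ᵥ x) ⬝ᵥ y := by rw [hB]
      _ = y ⬝ᵥ B *ᵥ x := dotProduct_comm _ _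
  have hpd : (P ⬝ᵥ P : ℝ) = ‖pstar‖ ^ 2 := by rw [hPe]; exact (hnormsq pstar).symm
  have hmin' : ∀ p : Fin n → ℝ, p ⬝ᵥ p ≤ δ ^ 2 →
      G ⬝ᵥ P + 1 / 2 * (P ⬝ᵥ B *ᵥ P) ≤ G ⬝ᵥ p + 1 / 2 * (p ⬝ᵥ B *ᵥ p) := by
    intro p hp
    have h2 : ‖WithLp.toLp 2 p‖ ^ 2 = p ⬝ᵥ p := hnormsq (WithLp.toLp 2 p)
    have h3 : ‖WithLp.toLp 2 p‖ ≤ δ := by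
      nlinarith [norm_nonneg (WithLp.toLp 2 p)]
    have h4 := hmin _ h3
    rw [hPe, hGe]
    exact h4
  -- the fundamental expansion inequality
  have expand : ∀ w : Fin n → ℝ, ((P + w) ⬝ᵥ (P + w)) ≤ δ ^ 2 →
      0 ≤ (G ⬝ᵥ w + w ⬝ᵥ B *ᵥ P) + 1 / 2 * (w ⬝ᵥ B *ᵥ w) := by
    intro w hw
    have h := hmin' (P + w) hw
    have hsw := hsymm P w
    simp only [Matrix.mulVec_add, dotProduct_add, add_dotProduct] at h
    linarith
  rcases eq_or_lt_of_le hfeas with hbd | hint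
  · -- boundary case : ‖pstar‖ = δ
    have hpd2 : (P ⬝ᵥ P : ℝ) = δ ^ 2 := by rw [hpd, hbd]
    obtain ⟨σ, hσdef⟩ : ∃ σ : ℝ, σ = -((G ⬝ᵥ P + P ⬝ᵥ B *ᵥ P)) / δ ^ 2 := ⟨_, rfl⟩
    obtain ⟨r, hrdef⟩ : ∃ r : Fin n → ℝ, r = G + B *ᵥ P + σ • P := ⟨_, rfl⟩
    have hδ2 : (0:ℝ) < δ ^ 2 := by positivity
    have hσδ : σ * δ ^ 2 = -(G ⬝ᵥ P + P ⬝ᵥ B *ᵥ P) := by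
      rw [hσdef]; field_simp
    have hBPP : (B *ᵥ P) ⬝ᵥ P = P ⬝ᵥ B *ᵥ P := dotProduct_comm _ _
    have hrp : r ⬝ᵥ P = 0 := by
      rw [hrdef]
      simp only [add_dotProduct, smul_dotProduct, smul_eq_mul, hpd2, hBPP]
      linarith [hσδ]
    have hpr : P ⬝ᵥ r = 0 := by rw [dotProduct_comm]; exact hrp
    obtain ⟨c, hcdef⟩ : ∃ c : ℝ, c = r ⬝ᵥ r := ⟨_, rfl⟩
    have hc0 : 0 ≤ c := hcdef ▸ hds r
    obtain ⟨c', hc'def⟩ : ∃ c' : ℝ, c' = c / δ ^ 2 := ⟨_, rfl⟩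
    have hc' : c' * δ ^ 2 = c := by rw [hc'def]; field_simp
    have hc'0 : 0 ≤ c' := by rw [hc'def]; positivity
    -- relations for substitution
    have hgr : G ⬝ᵥ r = c - r ⬝ᵥ B *ᵥ P := by
      have h1 : (G + B *ᵥ P + σ • P) ⬝ᵥ r = c := by
        rw [← hrdef, hcdef]
      have h2 : (B *ᵥ P) ⬝ᵥ r = r ⬝ᵥ B *ᵥ P := dotProduct_comm _ _
      simp only [add_dotProduct, smul_dotProduct, smul_eq_mul, h2, hpr, mul_zero] at h1
      linarith
    have hgp : G ⬝ᵥ P = -(σ * δ ^ 2) - P ⬝ᵥ B *ᵥ P := by linarith [hσδ]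
    -- step 1 : r = 0
    have key : ∀ t : ℝ, 0 < t → t ^ 2 * c' ≤ 1 →
        c ≤ t * (σ * c + 1/2 * (r ⬝ᵥ B *ᵥ r) + t * c' * (r ⬝ᵥ B *ᵥ P)
          + 1/2 * t ^ 2 * c' ^ 2 * (P ⬝ᵥ B *ᵥ P)) := by
      intro t ht htc
      obtain ⟨w, hwdef⟩ : ∃ w : Fin n → ℝ, w = (-(t ^ 2 * c')) • P + (-t) • r := ⟨_, rfl⟩
      have hfe : ((P + w) ⬝ᵥ (P + w)) ≤ δ ^ 2 := by
        have e2 : t ^ 2 * (c' * δ ^ 2) = t ^ 2 * c := by rw [hc']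
        have e4 : t ^ 4 * c' * (c' * δ ^ 2) = t ^ 4 * c' * c := by rw [hc']
        have H : 0 ≤ t * t * (1 - t ^ 2 * c') * c :=
          mul_nonneg (mul_nonneg (mul_nonneg ht.le ht.le) (by linarith)) hc0
        simp only [hwdef, dotProduct_add, add_dotProduct, dotProduct_smul, smul_dotProduct,
          smul_eq_mul, hpd2, hpr, hrp, ← hcdef]
        nlinarith [e2, e4, H]
      have h := expand w hfe
      have hsw := hsymm P r
      simp only [hwdef, Matrix.mulVec_add, Matrix.mulVec_smul, dotProduct_add, add_dotProduct,
        dotProduct_smul, smul_dotProduct, smul_eq_mul, hsw] at h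
      rw [hgr, hgp] at h
      have e5 : t ^ 2 * σ * (c' * δ ^ 2) = t ^ 2 * σ * c := by rw [hc']
      have h6 : t * c ≤ t * (t * (σ * c + 1/2 * (r ⬝ᵥ B *ᵥ r) + t * c' * (r ⬝ᵥ B *ᵥ P)
          + 1/2 * t ^ 2 * c' ^ 2 * (P ⬝ᵥ B *ᵥ P))) := by nlinarith [h, e5]
      have h7 := (mul_le_mul_iff_right₀ ht).mp h6
      linarith [(mul_le_mul_iff_right₀ ht).mp h6]
    have hcle : c ≤ 0 := by
      obtain ⟨G2, hG2def⟩ : ∃ G2 : ℝ → ℝ, G2 = fun t =>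
          t * (σ * c + 1/2 * (r ⬝ᵥ B *ᵥ r) + t * c' * (r ⬝ᵥ B *ᵥ P)
          + 1/2 * t ^ 2 * c' ^ 2 * (P ⬝ᵥ B *ᵥ P)) := ⟨_, rfl⟩
      have hGcont : Continuous G2 := by rw [hG2def]; fun_prop
      have hG0 : G2 0 = 0 := by rw [hG2def]; norm_num
      have hlim : Filter.Tendsto G2 (𝓝[>] (0:ℝ)) (𝓝 (G2 0)) :=
        (hGcont.tendsto 0).mono_left nhdsWithin_le_nhds
      rw [hG0] at hlim
      refine ge_of_tendsto hlim ?_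
      have hm : (0:ℝ) < min 1 (1 / (c' + 1)) :=
        lt_min one_pos (one_div_pos.mpr (by linarith))
      filter_upwards [Ioo_mem_nhdsGT_of_mem (Set.mem_Ico.mpr ⟨le_rfl, hm⟩)] with t ht
      have ht0 : 0 < t := ht.1
      have ht1 : t < 1 := lt_of_lt_of_le ht.2 (min_le_left _ _)
      have ht2 : t < 1 / (c' + 1) := lt_of_lt_of_le ht.2 (min_le_right _ _)
      have htc : t ^ 2 * c' ≤ 1 := by
        have h1 : t * (c' + 1) < 1 := by
          rw [← lt_div_iff₀ (by positivity)]; exact ht2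
        nlinarith [hc'0, ht0]
      have := key t ht0 htc
      rw [hG2def]
      exact this
    have hceq : c = 0 := le_antisymm hcle hc0
    have hr0 : r = 0 := by
      rw [hcdef] at hceq
      exact (dotProduct_self_eq_zero).1 hceq
    -- step 2 : σ ≥ 0
    have hσ0 : 0 ≤ σ := by
      have hkey : ∀ t : ℝ, 0 ≤ t → t < 1 →
          G ⬝ᵥ P + (1 + t) / 2 * (P ⬝ᵥ B *ᵥ P) ≤ 0 := by
        intro t ht0 ht1
        have hfe : ((t • P) ⬝ᵥ (t • P)) ≤ δ ^ 2 := by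
          simp only [dotProduct_smul, smul_dotProduct, smul_eq_mul, hpd2]
          have h1t : (0:ℝ) < 1 + t := by linarith
          nlinarith [mul_pos (sub_pos.2 ht1) h1t, hδ2]
        have h := hmin' (t • P) hfe
        simp only [Matrix.mulVec_smul, dotProduct_smul, smul_dotProduct, smul_eq_mul] at h
        nlinarith [h, ht1]
      have hlim2 : G ⬝ᵥ P + (1 + 1) / 2 * (P ⬝ᵥ B *ᵥ P) ≤ 0 := by
        obtain ⟨F, hF⟩ : ∃ F : ℝ → ℝ, F = fun t =>
            G ⬝ᵥ P + (1 + t) / 2 * (P ⬝ᵥ B *ᵥ P) := ⟨_, rfl⟩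
        have hFc : Continuous F := by rw [hF]; fun_prop
        have hten : Filter.Tendsto F (𝓝[<] (1:ℝ)) (𝓝 (F 1)) :=
          (hFc.tendsto 1).mono_left nhdsWithin_le_nhds
        have hle := le_of_tendsto hten (by
          filter_upwards [Ioo_mem_nhdsLT_of_mem (Set.mem_Ioc.mpr ⟨zero_lt_one, le_rfl⟩)] with t ht
          rw [hF]
          exact hkey t ht.1.le ht.2)
        rw [hF] at hle
        exact hle
      have h8 : 0 ≤ σ * δ ^ 2 := by rw [hσδ]; linarith
      nlinarith [hδ2, h8]
    -- consequence of r = 0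
    have hgB : G + B *ᵥ P = -(σ • P) := by
      have h0 := hr0
      rw [hrdef] at h0
      funext i
      have h := congrFun h0 i
      simp only [Pi.add_apply, Pi.smul_apply, Pi.zero_apply, smul_eq_mul, Pi.neg_apply] at h ⊢
      linarith
    -- step 3 : positive semidefiniteness
    have hpsd1 : ∀ v : Fin n → ℝ, v ⬝ᵥ P ≠ 0 →
        0 ≤ v ⬝ᵥ B *ᵥ v + σ * (v ⬝ᵥ v) := by
      intro v hv
      have hvv : 0 < v ⬝ᵥ v := by
        rcases (hds v).lt_or_eq with h | h
        · exact h
        · exfalso; apply hv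
          have : v = 0 := (dotProduct_self_eq_zero).1 h.symm
          simp [this]
      have hpv : P ⬝ᵥ v ≠ 0 := by
        rw [dotProduct_comm]; exact hv
      obtain ⟨t, htdef⟩ : ∃ t : ℝ, t = -2 * (P ⬝ᵥ v) / (v ⬝ᵥ v) := ⟨_, rfl⟩
      have ht : t ≠ 0 := by
        rw [htdef]
        exact div_ne_zero (by simpa using hpv) (ne_of_gt hvv)
      have hsphere : 2 * t * (P ⬝ᵥ v) + t ^ 2 * (v ⬝ᵥ v) = 0 := by
        rw [htdef]; field_simp; ring
      have hfe : ((P + t • v) ⬝ᵥ (P + t • v)) ≤ δ ^ 2 := by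
        have hc2 : v ⬝ᵥ P = P ⬝ᵥ v := dotProduct_comm _ _
        simp only [dotProduct_add, add_dotProduct, dotProduct_smul, smul_dotProduct,
          smul_eq_mul, hpd2, hc2]
        nlinarith [hsphere]
      have h := expand (t • v) hfe
      have hgBw : G ⬝ᵥ (t • v) + (t • v) ⬝ᵥ B *ᵥ P = -(σ * (t * (P ⬝ᵥ v))) := by
        have h1 : (t • v) ⬝ᵥ B *ᵥ P = (B *ᵥ P) ⬝ᵥ (t • v) := dotProduct_comm _ _
        have h2 : G ⬝ᵥ (t • v) + (B *ᵥ P) ⬝ᵥ (t • v)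
            = (G + B *ᵥ P) ⬝ᵥ (t • v) := (add_dotProduct _ _ _).symm
        rw [h1, h2, hgB]
        simp only [neg_dotProduct, smul_dotProduct, dotProduct_smul, smul_eq_mul]
        ring
      rw [hgBw] at h
      have h3 : (t • v) ⬝ᵥ B *ᵥ (t • v) = t ^ 2 * (v ⬝ᵥ B *ᵥ v) := by
        simp only [Matrix.mulVec_smul, dotProduct_smul, smul_dotProduct, smul_eq_mul]; ring
      rw [h3] at h
      have ht2 : 0 < t ^ 2 := by positivity
      nlinarith [h, hsphere, ht2]
    have hpsd : ∀ x : Fin n → ℝ, 0 ≤ x ⬝ᵥ B *ᵥ x + σ * (x ⬝ᵥ x) := by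
      intro x
      by_cases hx : x ⬝ᵥ P = 0
      · -- limit argument
        obtain ⟨F, hFdef⟩ : ∃ F : ℝ → ℝ, F = fun s =>
            (x ⬝ᵥ B *ᵥ x + σ * (x ⬝ᵥ x)) + s * (2 * (x ⬝ᵥ B *ᵥ P))
            + s ^ 2 * ((P ⬝ᵥ B *ᵥ P) + σ * δ ^ 2) := ⟨_, rfl⟩
        have hFs : ∀ s : ℝ, s ≠ 0 → 0 ≤ F s := by
          intro s hs
          have hne : (x + s • P) ⬝ᵥ P ≠ 0 := by
            simp only [add_dotProduct, smul_dotProduct, smul_eq_mul, hx, hpd2, zero_add]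
            exact mul_ne_zero hs (ne_of_gt hδ2)
          have h := hpsd1 (x + s • P) hne
          have hsx : P ⬝ᵥ B *ᵥ x = x ⬝ᵥ B *ᵥ P := hsymm P x
          have hpx : P ⬝ᵥ x = 0 := by rw [dotProduct_comm]; exact hx
          simp only [Matrix.mulVec_add, Matrix.mulVec_smul, dotProduct_add, add_dotProduct,
            dotProduct_smul, smul_dotProduct, smul_eq_mul, hsx, hpx, hx, hpd2] at h
          rw [hFdef]
          dsimp only
          nlinarith [h]
        have hFc : Continuous F := by rw [hFdef]; fun_prop
        have hlim : Filter.Tendsto F (𝓝[≠] (0:ℝ)) (𝓝 (F 0)) :=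
          (hFc.tendsto 0).mono_left nhdsWithin_le_nhds
        have h0 : 0 ≤ F 0 := by
          refine ge_of_tendsto hlim ?_
          filter_upwards [self_mem_nhdsWithin] with s hs
          exact hFs s hs
        have hF0 : F 0 = x ⬝ᵥ B *ᵥ x + σ * (x ⬝ᵥ x) := by rw [hFdef]; ring
        rw [hF0] at h0
        exact h0
      · exact hpsd1 x hx
    refine ⟨σ, hσ0, ?_, ?_, by rw [hbd]; ring⟩
    · rw [Matrix.posSemidef_iff_dotProduct_mulVec]
      constructor
      · rw [Matrix.IsHermitian, Matrix.conjTranspose_eq_transpose_of_trivial]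
        rw [Matrix.transpose_add, hB, Matrix.transpose_smul, Matrix.transpose_one]
      · intro x
        have := hpsd x
        simp only [star_trivial, Matrix.add_mulVec, Matrix.smul_mulVec,
          Matrix.one_mulVec, dotProduct_add, dotProduct_smul, smul_eq_mul]
        linarith
    · funext i
      have h := congrFun hgB i
      simp only [Pi.add_apply, Pi.neg_apply, Pi.smul_apply, smul_eq_mul] at h
      rw [hPe, hGe] at h
      simp only [Matrix.add_mulVec, Matrix.smul_mulVec, Matrix.one_mulVec,
        Pi.add_apply, Pi.smul_apply, Pi.neg_apply, smul_eq_mul]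
      show _ = -(g i)
      linarith
  · -- interior case : ‖pstar‖ < δ
    have hpd2 : (P ⬝ᵥ P : ℝ) < δ ^ 2 := by
      rw [hpd]; nlinarith [norm_nonneg pstar]
    obtain ⟨r, hrdef⟩ : ∃ r : Fin n → ℝ, r = G + B *ᵥ P := ⟨_, rfl⟩
    -- feasibility of small perturbations
    have feas : ∀ w : Fin n → ℝ, ∀ t : ℝ, 0 < t →
        t ≤ min 1 ((δ ^ 2 - P ⬝ᵥ P) / (2 * |P ⬝ᵥ w| + w ⬝ᵥ w + 1)) →
        ((P + t • w) ⬝ᵥ (P + t • w)) ≤ δ ^ 2 := by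
      intro w t ht htle
      have ht1 : t ≤ 1 := le_trans htle (min_le_left _ _)
      have ht2 : t ≤ (δ ^ 2 - P ⬝ᵥ P) / (2 * |P ⬝ᵥ w| + w ⬝ᵥ w + 1) :=
        le_trans htle (min_le_right _ _)
      have hden : (0:ℝ) < 2 * |P ⬝ᵥ w| + w ⬝ᵥ w + 1 := by
        have := abs_nonneg (P ⬝ᵥ w)
        have := hds w
        linarith
      have ht3 : t * (2 * |P ⬝ᵥ w| + w ⬝ᵥ w + 1) ≤ δ ^ 2 - P ⬝ᵥ P := by
        rw [← le_div_iff₀ hden]; exact ht2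
      have hcomm : w ⬝ᵥ P = P ⬝ᵥ w := dotProduct_comm _ _
      simp only [dotProduct_add, add_dotProduct, dotProduct_smul, smul_dotProduct,
        smul_eq_mul, hcomm]
      have habs : P ⬝ᵥ w ≤ |P ⬝ᵥ w| := le_abs_self _
      nlinarith [mul_nonneg (mul_nonneg ht.le (sub_nonneg.2 ht1)) (hds w),
        mul_nonneg ht.le (sub_nonneg.2 habs)]
    -- r = 0
    have hrr : r ⬝ᵥ r ≤ 0 := by
      by_contra hcon
      push_neg at hcon
      obtain ⟨tm, htm⟩ : ∃ tm : ℝ, tm = min 1 ((δ ^ 2 - P ⬝ᵥ P) /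
        (2 * |P ⬝ᵥ (-r)| + (-r) ⬝ᵥ (-r) + 1)) := ⟨_, rfl⟩
      have htmpos : 0 < tm := by
        rw [htm]
        apply lt_min one_pos
        apply div_pos (by linarith)
        have := abs_nonneg (P ⬝ᵥ (-r))
        have := hds (-r)
        linarith
      have hkey : ∀ t : ℝ, 0 < t → t ≤ tm → r ⬝ᵥ r ≤ t / 2 * (r ⬝ᵥ B *ᵥ r) := by
        intro t ht htle
        have hfe := feas (-r) t ht (htm ▸ htle)
        have h := expand (t • (-r)) hfe
        have h1 : G ⬝ᵥ (t • (-r)) + (t • (-r)) ⬝ᵥ B *ᵥ P = -(t * (r ⬝ᵥ r)) := by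
          have hc1 : (t • (-r)) ⬝ᵥ B *ᵥ P = (B *ᵥ P) ⬝ᵥ (t • (-r)) := dotProduct_comm _ _
          have hc2 : G ⬝ᵥ (t • (-r)) + (B *ᵥ P) ⬝ᵥ (t • (-r))
              = (G + B *ᵥ P) ⬝ᵥ (t • (-r)) := (add_dotProduct _ _ _).symm
          rw [hc1, hc2, ← hrdef]
          simp only [dotProduct_smul, smul_eq_mul, dotProduct_neg]
          ring
        have h2 : (t • (-r)) ⬝ᵥ B *ᵥ (t • (-r)) = t ^ 2 * (r ⬝ᵥ B *ᵥ r) := by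
          simp only [Matrix.mulVec_smul, dotProduct_smul, smul_dotProduct, smul_eq_mul,
            Matrix.mulVec_neg, dotProduct_neg, neg_dotProduct, neg_neg]
          ring
        rw [h1, h2] at h
        nlinarith [h, ht]
      rcases le_or_gt (r ⬝ᵥ B *ᵥ r) 0 with hBr | hBr
      · have := hkey tm htmpos le_rfl
        nlinarith [htmpos]
      · obtain ⟨t0, ht0d⟩ : ∃ t0 : ℝ, t0 = min tm ((r ⬝ᵥ r) / (r ⬝ᵥ B *ᵥ r)) := ⟨_, rfl⟩
        have ht0pos : 0 < t0 := ht0d ▸ lt_min htmpos (div_pos hcon hBr)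
        have hk := hkey t0 ht0pos (ht0d ▸ min_le_left _ _)
        have h4 : t0 ≤ (r ⬝ᵥ r) / (r ⬝ᵥ B *ᵥ r) := ht0d ▸ min_le_right _ _
        have h5 : t0 * (r ⬝ᵥ B *ᵥ r) ≤ r ⬝ᵥ r := by
          rw [← le_div_iff₀ hBr]; exact h4
        nlinarith [ht0pos]
    have hr0 : r = 0 := (dotProduct_self_eq_zero).1 (le_antisymm hrr (hds r))
    -- B is positive semidefinite
    have hpsd : ∀ x : Fin n → ℝ, 0 ≤ x ⬝ᵥ B *ᵥ x := by
      intro x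
      obtain ⟨tm, htm⟩ : ∃ tm : ℝ, tm = min 1 ((δ ^ 2 - P ⬝ᵥ P) /
        (2 * |P ⬝ᵥ x| + x ⬝ᵥ x + 1)) := ⟨_, rfl⟩
      have htmpos : 0 < tm := by
        rw [htm]
        apply lt_min one_pos
        apply div_pos (by linarith)
        have := abs_nonneg (P ⬝ᵥ x)
        have := hds x
        linarith
      have hfe := feas x tm htmpos (le_of_eq htm)
      have h := expand (tm • x) hfe
      have h1 : G ⬝ᵥ (tm • x) + (tm • x) ⬝ᵥ B *ᵥ P = 0 := by
        have hc1 : (tm • x) ⬝ᵥ B *ᵥ P = (B *ᵥ P) ⬝ᵥ (tm • x) := dotProduct_comm _ _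
        have hc2 : G ⬝ᵥ (tm • x) + (B *ᵥ P) ⬝ᵥ (tm • x)
            = (G + B *ᵥ P) ⬝ᵥ (tm • x) := (add_dotProduct _ _ _).symm
        rw [hc1, hc2, ← hrdef, hr0]
        simp
      have h2 : (tm • x) ⬝ᵥ B *ᵥ (tm • x) = tm ^ 2 * (x ⬝ᵥ B *ᵥ x) := by
        simp only [Matrix.mulVec_smul, dotProduct_smul, smul_dotProduct, smul_eq_mul]
        ring
      rw [h1, h2] at h
      nlinarith [h, mul_pos htmpos htmpos]
    refine ⟨0, le_rfl, ?_, ?_, by ring⟩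
    · rw [zero_smul, add_zero]
      rw [Matrix.posSemidef_iff_dotProduct_mulVec]
      constructor
      · rw [Matrix.IsHermitian, Matrix.conjTranspose_eq_transpose_of_trivial, hB]
      · intro x
        simpa using hpsd x
    · rw [zero_smul, add_zero]
      funext i
      have h := congrFun hr0 i
      rw [hrdef] at h
      simp only [Pi.add_apply, Pi.zero_apply] at h
      rw [hPe, hGe] at h
      show _ = -(g i)
      linarith
end

section
/- Let n be a positive integer, B a symmetric n×n real matrix, g ∈ ℝⁿ, and δ > 0, and let p* be a global minimizer of q(p) = gᵀp + (1/2)pᵀBp over {p ∈ ℝⁿ : ‖p‖₂ ≤ δ}. If σ₁ ≥ 0 and σ₂ ≥ 0 both satisfy: B + σᵢI is positive semidefinite, (B + σᵢI)p* = -g, and σᵢ(δ - ‖p*‖₂) = 0 (for i = 1, 2), then σ₁ = σ₂; i.e., the Lagrange multiplier σ* in the Moré–Sorensen optimality conditions is unique. -/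
open Matrix

/-- Uniqueness of the Lagrange multiplier in the Moré–Sorensen optimality
conditions: if `p⋆` is a global minimizer of the trust-region subproblem and
`σ₁, σ₂ ≥ 0` both satisfy the optimality conditions with `p⋆`, then `σ₁ = σ₂`. -/
theorem mss_stmt2 (n : ℕ) (hn : 0 < n)
    (B : Matrix (Fin n) (Fin n) ℝ) (hB : B.IsSymm)
    (g : EuclideanSpace ℝ (Fin n)) (δ : ℝ) (hδ : 0 < δ)
    (pstar : EuclideanSpace ℝ (Fin n))
    (hfeas : ‖pstar‖ ≤ δ)
    (hmin : ∀ p : EuclideanSpace ℝ (Fin n), ‖p‖ ≤ δ →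
      g ⬝ᵥ pstar + (1 / 2) * (pstar ⬝ᵥ B.mulVec pstar) ≤
        g ⬝ᵥ p + (1 / 2) * (p ⬝ᵥ B.mulVec p))
    (σ₁ σ₂ : ℝ) (hσ₁ : 0 ≤ σ₁) (hσ₂ : 0 ≤ σ₂)
    (hpsd₁ : (B + σ₁ • 1).PosSemidef)
    (heq₁ : (B + σ₁ • 1).mulVec pstar = -g)
    (hcomp₁ : σ₁ * (δ - ‖pstar‖) = 0)
    (hpsd₂ : (B + σ₂ • 1).PosSemidef)
    (heq₂ : (B + σ₂ • 1).mulVec pstar = -g)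
    (hcomp₂ : σ₂ * (δ - ‖pstar‖) = 0) :
    σ₁ = σ₂ := by
  by_cases hp : pstar = 0
  · have hnorm : ‖pstar‖ = 0 := by simp [hp]
    rw [hnorm, sub_zero] at hcomp₁ hcomp₂
    have h1 : σ₁ = 0 := by
      rcases mul_eq_zero.mp hcomp₁ with h | h
      · exact h
      · exact absurd h (ne_of_gt hδ)
    have h2 : σ₂ = 0 := by
      rcases mul_eq_zero.mp hcomp₂ with h | h
      · exact h
      · exact absurd h (ne_of_gt hδ)
    rw [h1, h2]
  · have heq : (σ₁ • pstar : Fin n → ℝ) = σ₂ • pstar := by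
      have h := heq₁.trans heq₂.symm
      rw [add_mulVec, add_mulVec] at h
      have h' : ((σ₁ • 1 : Matrix (Fin n) (Fin n) ℝ).mulVec pstar)
          = (σ₂ • 1 : Matrix (Fin n) (Fin n) ℝ).mulVec pstar :=
        add_left_cancel h
      simpa [smul_mulVec, one_mulVec] using h'
    obtain ⟨i, hi⟩ : ∃ i, (pstar : Fin n → ℝ) i ≠ 0 := by
      by_contra hc
      push_neg at hc
      exact hp (by ext j; simpa using hc j)
    have := congrFun heq i
    simp only [Pi.smul_apply, smul_eq_mul] at this
    exact mul_right_cancel₀ hi this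
end

section
/- Let n be a positive integer, B a symmetric n×n real matrix, g ∈ ℝⁿ, and δ > 0. Suppose p* ∈ ℝⁿ and σ* ≥ 0 satisfy ‖p*‖₂ ≤ δ, (B + σ*I)p* = -g, σ*(δ - ‖p*‖₂) = 0, and additionally B + σ*I is positive definite. Then p* is the unique global minimizer of q(p) = gᵀp + (1/2)pᵀBp over {p ∈ ℝⁿ : ‖p‖₂ ≤ δ}: any p with ‖p‖₂ ≤ δ and p ≠ p* satisfies q(p) > q(p*). -/
open Matrix

/-- If `p⋆` and `σ⋆ ≥ 0` satisfy the Moré–Sorensen optimality conditions and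
moreover `B + σ⋆I` is positive definite, then `p⋆` is the unique global
minimizer of `q(p) = gᵀp + (1/2)pᵀBp` over `{p : ‖p‖₂ ≤ δ}`: every feasible
`p ≠ p⋆` satisfies `q(p) > q(p⋆)`. -/
theorem mss_stmt3 (n : ℕ) (hn : 0 < n)
    (B : Matrix (Fin n) (Fin n) ℝ) (hB : B.IsSymm)
    (g : EuclideanSpace ℝ (Fin n)) (δ : ℝ) (hδ : 0 < δ)
    (pstar : EuclideanSpace ℝ (Fin n)) (σ : ℝ) (hσ : 0 ≤ σ)
    (hfeas : ‖pstar‖ ≤ δ)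
    (heq : (B + σ • 1).mulVec pstar = -g)
    (hcomp : σ * (δ - ‖pstar‖) = 0)
    (hpd : (B + σ • 1).PosDef) :
    ∀ p : EuclideanSpace ℝ (Fin n), ‖p‖ ≤ δ → p ≠ pstar →
      g ⬝ᵥ pstar + (1 / 2) * (pstar ⬝ᵥ B.mulVec pstar) <
        g ⬝ᵥ p + (1 / 2) * (p ⬝ᵥ B.mulVec p) := by
  intro p hp hne
  set M := B + σ • (1 : Matrix (Fin n) (Fin n) ℝ) with hM
  have hMsymm : M.IsSymm := hB.add (Matrix.isSymm_one.smul σ)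
  have hnorm : ∀ x : EuclideanSpace ℝ (Fin n), x ⬝ᵥ x = ‖x‖^2 := by
    intro x
    rw [← real_inner_self_eq_norm_sq]
    simp [PiLp.inner_apply, dotProduct]
    rw [EuclideanSpace.norm_eq, Real.sq_sqrt (by positivity)]
    simp [sq]
  have hMv : ∀ x : Fin n → ℝ, M.mulVec x = B.mulVec x + σ • x := by
    intro x
    simp [hM, Matrix.add_mulVec, Matrix.smul_mulVec]
  -- key positivity
  have hd0 : (p : Fin n → ℝ) - pstar ≠ 0 := sub_ne_zero.mpr (by
    intro h; apply hne; ext i; exact congrFun h i)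
  have hkey : 0 < ((p : Fin n → ℝ) - (pstar : Fin n → ℝ)) ⬝ᵥ M.mulVec ((p : Fin n → ℝ) - (pstar : Fin n → ℝ)) := by
    have := hpd.dotProduct_mulVec_pos (x := (p : Fin n → ℝ) - (pstar : Fin n → ℝ)) hd0
    simpa using this
  -- expand
  have hsym : ∀ x y : Fin n → ℝ, x ⬝ᵥ M.mulVec y = y ⬝ᵥ M.mulVec x := by
    intro x y
    rw [Matrix.dotProduct_mulVec, ← Matrix.mulVec_transpose, hMsymm.eq,
      dotProduct_comm]
  have hpMp : (p : Fin n → ℝ) ⬝ᵥ M.mulVec pstar = -(g ⬝ᵥ p) := by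
    rw [heq, dotProduct_neg, dotProduct_comm]
  have hsMp : (pstar : Fin n → ℝ) ⬝ᵥ M.mulVec p = -(g ⬝ᵥ p) := by
    rw [hsym]; exact hpMp
  have hsMs : (pstar : Fin n → ℝ) ⬝ᵥ M.mulVec pstar = -(g ⬝ᵥ pstar) := by
    rw [heq, dotProduct_neg, dotProduct_comm]
  have hexp : ((p : Fin n → ℝ) - (pstar : Fin n → ℝ)) ⬝ᵥ M.mulVec ((p : Fin n → ℝ) - (pstar : Fin n → ℝ))
      = p ⬝ᵥ M.mulVec p - p ⬝ᵥ M.mulVec pstar - pstar ⬝ᵥ M.mulVec p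
        + pstar ⬝ᵥ M.mulVec pstar := by
    rw [Matrix.mulVec_sub, dotProduct_sub, sub_dotProduct,
      sub_dotProduct]
    ring
  have hpMpB : (p : Fin n → ℝ) ⬝ᵥ M.mulVec p = p ⬝ᵥ B.mulVec p + σ * ‖p‖^2 := by
    rw [hMv, dotProduct_add, dotProduct_smul, ← hnorm p]
    simp [smul_eq_mul]
  have hsMsB : (pstar : Fin n → ℝ) ⬝ᵥ B.mulVec pstar
      = -(g ⬝ᵥ pstar) - σ * ‖pstar‖^2 := by
    have := hsMs
    rw [hMv, dotProduct_add, dotProduct_smul, hnorm pstar,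
      smul_eq_mul] at this
    linarith
  -- complementarity
  have hcase : 0 ≤ σ * (‖pstar‖^2 - ‖p‖^2) := by
    rcases mul_eq_zero.mp hcomp with h | h
    · simp [h]
    · have hps : ‖pstar‖ = δ := by linarith
      have : ‖p‖^2 ≤ ‖pstar‖^2 := by
        rw [hps]
        nlinarith [norm_nonneg p]
      nlinarith
  have hkey2 : 0 < p ⬝ᵥ B.mulVec p + σ * ‖p‖^2 + 2 * (g ⬝ᵥ p) - g ⬝ᵥ pstar := by
    rw [hexp, hpMpB, hpMp, hsMp, hsMs] at hkey
    linarith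
  rw [hsMsB]
  nlinarith [hkey2, hcase]
end

section
/- Let n be a positive integer, B a symmetric positive-definite n×n real matrix, and g ∈ ℝⁿ with g ≠ 0. Define p(σ) = -(B + σI)⁻¹g for σ ≥ 0. Then the function σ ↦ ‖p(σ)‖₂ is strictly decreasing on [0, ∞); equivalently, the function φ(σ) = 1/‖p(σ)‖₂ - 1/δ is strictly increasing on [0, ∞) for any fixed δ > 0. -/
open Matrix

/-- `p(σ) = -(B + σI)⁻¹ g`, the solution of the shifted system `(B + σI)p = -g`. -/
noncomputable def psig {n : ℕ} (B : Matrix (Fin n) (Fin n) ℝ)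
    (g : EuclideanSpace ℝ (Fin n)) (σ : ℝ) : EuclideanSpace ℝ (Fin n) :=
  WithLp.toLp 2 (-((B + σ • 1)⁻¹.mulVec g))

lemma smul_one_posSemidef {n : ℕ} {σ : ℝ} (hσ : 0 ≤ σ) :
    (σ • (1 : Matrix (Fin n) (Fin n) ℝ)).PosSemidef := by
  refine posSemidef_iff_dotProduct_mulVec.mpr ⟨?_, ?_⟩
  · simp [Matrix.IsHermitian, Matrix.conjTranspose_smul]
  · intro x
    rw [smul_mulVec, one_mulVec, dotProduct_smul]
    exact smul_nonneg hσ (dotProduct_star_self_nonneg x)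

lemma shifted_posDef {n : ℕ} {B : Matrix (Fin n) (Fin n) ℝ} (hB : B.PosDef)
    {σ : ℝ} (hσ : 0 ≤ σ) : (B + σ • 1).PosDef :=
  hB.add_posSemidef (smul_one_posSemidef hσ)

lemma inv_solves {n : ℕ} {A : Matrix (Fin n) (Fin n) ℝ} (hA : A.PosDef)
    (g : Fin n → ℝ) : A.mulVec (A⁻¹.mulVec g) = g := by
  rw [Matrix.mulVec_mulVec, Matrix.mul_nonsing_inv _ hA.det_pos.ne'.isUnit,
    Matrix.one_mulVec]

lemma inv_mulVec_ne_zero {n : ℕ} {A : Matrix (Fin n) (Fin n) ℝ} (hA : A.PosDef)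
    {g : Fin n → ℝ} (hg : g ≠ 0) : A⁻¹.mulVec g ≠ 0 := by
  intro h0
  apply hg
  have := inv_solves hA g
  rw [h0, Matrix.mulVec_zero] at this
  exact this.symm

lemma dot_lt {n : ℕ} {A : Matrix (Fin n) (Fin n) ℝ} (hA : A.PosDef)
    {t : ℝ} (ht : 0 < t) {g : Fin n → ℝ} (hg : g ≠ 0) :
    ((A + t • 1)⁻¹.mulVec g) ⬝ᵥ ((A + t • 1)⁻¹.mulVec g)
      < (A⁻¹.mulVec g) ⬝ᵥ (A⁻¹.mulVec g) := by
  have hA2 : (A + t • 1).PosDef := hA.add_posSemidef (smul_one_posSemidef ht.le)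
  set q : Fin n → ℝ := (A + t • 1)⁻¹.mulVec g with hqdef
  set u : Fin n → ℝ := A⁻¹.mulVec q with hudef
  have hq_ne : q ≠ 0 := inv_mulVec_ne_zero hA2 hg
  have hq_solve : A.mulVec q + t • q = g := by
    have := inv_solves hA2 g
    rw [Matrix.add_mulVec, Matrix.smul_mulVec, Matrix.one_mulVec] at this
    exact this
  have hpq : A⁻¹.mulVec g = q + t • u := by
    have h1 : A.mulVec (q + t • u) = g := by
      rw [Matrix.mulVec_add, Matrix.mulVec_smul, hudef, inv_solves hA]
      exact hq_solve
    have hinj : Function.Injective A.mulVec :=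
      Matrix.mulVec_injective_iff_isUnit.mpr hA.isUnit
    exact hinj (by rw [inv_solves hA, h1])
  have hqu : 0 < q ⬝ᵥ u := by
    have := (hA.inv).dotProduct_mulVec_pos hq_ne
    simpa [hudef] using this
  have huu : 0 ≤ u ⬝ᵥ u := by
    have := dotProduct_star_self_nonneg u
    simpa using this
  rw [hpq]
  have expand : (q + t • u) ⬝ᵥ (q + t • u)
      = q ⬝ᵥ q + 2 * t * (q ⬝ᵥ u) + t ^ 2 * (u ⬝ᵥ u) := by
    simp only [add_dotProduct, dotProduct_add, smul_dotProduct,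
      dotProduct_smul, dotProduct_comm u q, smul_eq_mul]
    ring
  rw [expand]
  nlinarith

lemma norm_sq_eq_dot {n : ℕ} (x : EuclideanSpace ℝ (Fin n)) :
    ‖x‖ ^ 2 = (x : Fin n → ℝ) ⬝ᵥ (x : Fin n → ℝ) := by
  rw [← real_inner_self_eq_norm_sq, EuclideanSpace.inner_eq_star_dotProduct]
  rfl

/-- For `B` symmetric positive definite and `g ≠ 0`, the map `σ ↦ ‖p(σ)‖₂` with
`p(σ) = -(B + σI)⁻¹g` is strictly decreasing on `[0, ∞)`; equivalently, for any
`δ > 0` the secular function `φ(σ) = 1/‖p(σ)‖₂ - 1/δ` is strictly increasing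
on `[0, ∞)`. -/
theorem mss_stmt6 (n : ℕ) (hn : 0 < n)
    (B : Matrix (Fin n) (Fin n) ℝ) (hB : B.PosDef)
    (g : EuclideanSpace ℝ (Fin n)) (hg : g ≠ 0) :
    StrictAntiOn (fun σ : ℝ => ‖psig B g σ‖) (Set.Ici 0) ∧
    ∀ δ : ℝ, 0 < δ →
      StrictMonoOn (fun σ : ℝ => 1 / ‖psig B g σ‖ - 1 / δ) (Set.Ici 0) := by
  have hg' : (g : Fin n → ℝ) ≠ 0 := fun h => hg ((WithLp.ofLp_eq_zero 2).mp h)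
  have hpos : ∀ σ : ℝ, 0 ≤ σ → 0 < ‖psig B g σ‖ := by
    intro σ hσ
    have hA := shifted_posDef hB hσ
    rw [norm_pos_iff, psig, ne_eq, WithLp.toLp_eq_zero, neg_eq_zero]
    intro h0
    exact inv_mulVec_ne_zero hA hg' (funext fun i => congrFun h0 i)
  have key : StrictAntiOn (fun σ : ℝ => ‖psig B g σ‖) (Set.Ici 0) := by
    intro σ₁ h₁ σ₂ h₂ hlt
    simp only [Set.mem_Ici] at h₁ h₂
    have hA : (B + σ₁ • 1).PosDef := shifted_posDef hB h₁
    have ht : 0 < σ₂ - σ₁ := sub_pos.mpr hlt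
    have hsplit : B + σ₂ • 1 = (B + σ₁ • 1) + (σ₂ - σ₁) • 1 := by
      rw [show σ₂ = σ₁ + (σ₂ - σ₁) by ring, add_smul]
      abel
    have hdot := dot_lt hA ht hg'
    rw [← hsplit] at hdot
    have hsq : ‖psig B g σ₂‖ ^ 2 < ‖psig B g σ₁‖ ^ 2 := by
      simp only [psig, WithLp.toLp_neg, norm_neg]
      rw [norm_sq_eq_dot, norm_sq_eq_dot]
      exact hdot
    exact lt_of_pow_lt_pow_left₀ 2 (norm_nonneg _) hsq
  refine ⟨key, fun δ hδ σ₁ h₁ σ₂ h₂ hlt => ?_⟩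
  have h := key h₁ h₂ hlt
  have p2 := hpos σ₂ h₂
  have : 1 / ‖psig B g σ₁‖ < 1 / ‖psig B g σ₂‖ := one_div_lt_one_div_of_lt p2 h
  simpa using sub_lt_sub_right this (1 / δ)
end

section
/- Let n be a positive integer, B a symmetric positive-definite n×n real matrix, and g ∈ ℝⁿ with g ≠ 0. Define p(σ) = -(B + σI)⁻¹g for σ ≥ 0. Then σ ↦ 1/‖p(σ)‖₂ is differentiable on [0, ∞) with derivative at σ equal to p(σ)ᵀ(B + σI)⁻¹p(σ) / ‖p(σ)‖₂³. Equivalently, if p̂ denotes the solution of (B + σI)p̂ = -p(σ), the derivative equals -(p(σ)ᵀp̂)/‖p(σ)‖₂³, which is the quantity φ'(p) computed in the MSS method. -/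
open Matrix

open scoped RealInnerProductSpace

attribute [local instance] Matrix.linftyOpNormedRing Matrix.linftyOpNormedAlgebra

/-- For `B` symmetric positive definite and `g ≠ 0`, the map `σ ↦ 1/‖p(σ)‖₂`
is differentiable on `[0, ∞)` with derivative
`p(σ)ᵀ(B + σI)⁻¹p(σ) / ‖p(σ)‖₂³` at `σ`; moreover, if `p̂` solves
`(B + σI)p̂ = -p(σ)`, this derivative equals `-(p(σ)ᵀp̂)/‖p(σ)‖₂³`, the
quantity `φ'` computed in the MSS method. -/
theorem mss_stmt8 (n : ℕ) (hn : 0 < n)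
    (B : Matrix (Fin n) (Fin n) ℝ) (hB : B.PosDef)
    (g : EuclideanSpace ℝ (Fin n)) (hg : g ≠ 0)
    (σ : ℝ) (hσ : 0 ≤ σ) :
    HasDerivAt (fun t : ℝ => 1 / ‖psig B g t‖)
      ((psig B g σ ⬝ᵥ (B + σ • 1)⁻¹.mulVec (psig B g σ)) / ‖psig B g σ‖ ^ 3) σ ∧
    ∀ phat : Fin n → ℝ, (B + σ • 1).mulVec phat = -(psig B g σ) →
      (psig B g σ ⬝ᵥ (B + σ • 1)⁻¹.mulVec (psig B g σ)) / ‖psig B g σ‖ ^ 3 =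
        -(psig B g σ ⬝ᵥ phat) / ‖psig B g σ‖ ^ 3 := by
  classical
  set A : Matrix (Fin n) (Fin n) ℝ := B + σ • 1 with hA
  have hsmul : (σ • (1 : Matrix (Fin n) (Fin n) ℝ)).PosSemidef := by
    constructor
    · simp [Matrix.IsHermitian, Matrix.conjTranspose_smul]
    · intro x
      exact (Matrix.PosSemidef.one.smul hσ).2 x
  have hApd : A.PosDef := hB.add_posSemidef hsmul
  have hdet : IsUnit A.det := isUnit_iff_ne_zero.2 hApd.det_pos.ne'
  have hAu : IsUnit A := (Matrix.isUnit_iff_isUnit_det A).2 hdet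
  have hAinvA : A⁻¹ * A = 1 := Matrix.nonsing_inv_mul A hdet
  have hAAinv : A * A⁻¹ = 1 := Matrix.mul_nonsing_inv A hdet
  set p : EuclideanSpace ℝ (Fin n) := psig B g σ with hp
  have hpval : (p : Fin n → ℝ) = -(A⁻¹.mulVec g) := by simp [hp, psig, A]
  have hAinvp : A⁻¹.mulVec (p : Fin n → ℝ) = -(A⁻¹.mulVec (A⁻¹.mulVec g)) := by
    rw [hpval, Matrix.mulVec_neg]
  have hpne : p ≠ 0 := by
    intro h0
    apply hg
    have h1 : A⁻¹.mulVec g = 0 := by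
      have := congrArg Neg.neg (congrArg (fun z : EuclideanSpace ℝ (Fin n) => (z : Fin n → ℝ)) h0)
      simpa [hpval] using this
    have : A.mulVec (A⁻¹.mulVec g) = g := by
      rw [Matrix.mulVec_mulVec, hAAinv, Matrix.one_mulVec]
    rw [h1, Matrix.mulVec_zero] at this
    exact (WithLp.ofLp_eq_zero 2).1 this.symm
  have hpnorm : (0 : ℝ) < ‖p‖ := norm_pos_iff.2 hpne
  -- derivative of the matrix path
  have hAt : HasDerivAt (fun t : ℝ => B + t • (1 : Matrix (Fin n) (Fin n) ℝ))
      (1 : Matrix (Fin n) (Fin n) ℝ) σ := by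
    have h := ((hasDerivAt_id σ).smul_const (1 : Matrix (Fin n) (Fin n) ℝ)).const_add B
    simp only [id, one_smul] at h
    exact h
  -- derivative of the inverse
  have hu : (hAu.unit : Matrix (Fin n) (Fin n) ℝ) = A := hAu.unit_spec
  have huinv : ((hAu.unit⁻¹ : (Matrix (Fin n) (Fin n) ℝ)ˣ) : Matrix (Fin n) (Fin n) ℝ) = A⁻¹ := by
    have h := Ring.inverse_unit hAu.unit
    rw [hu] at h
    rw [Matrix.nonsing_inv_eq_ringInverse]
    exact h.symm
  have hinvF : HasFDerivAt (Ring.inverse : Matrix (Fin n) (Fin n) ℝ → Matrix (Fin n) (Fin n) ℝ)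
      (-ContinuousLinearMap.mulLeftRight ℝ _ (A⁻¹) (A⁻¹)) A := by
    have := hasFDerivAt_ringInverse (𝕜 := ℝ) hAu.unit
    rwa [hu, huinv] at this
  have hinvD : HasDerivAt (fun t : ℝ => Ring.inverse (B + t • (1 : Matrix (Fin n) (Fin n) ℝ)))
      (-(A⁻¹ * 1 * A⁻¹)) σ := by
    have := hinvF.comp_hasDerivAt σ hAt
    simp at this
    rw [mul_one]
    exact this
  have hinvD' : HasDerivAt (fun t : ℝ => (B + t • (1 : Matrix (Fin n) (Fin n) ℝ))⁻¹)
      (-(A⁻¹ * A⁻¹)) σ := by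
    have heq : (fun t : ℝ => (B + t • (1 : Matrix (Fin n) (Fin n) ℝ))⁻¹)
        = fun t : ℝ => Ring.inverse (B + t • (1 : Matrix (Fin n) (Fin n) ℝ)) := by
      funext t; exact Matrix.nonsing_inv_eq_ringInverse _
    rw [heq]
    simpa using hinvD
  -- the linear map  M ↦ -(M *ᵥ g)  into EuclideanSpace
  let L : Matrix (Fin n) (Fin n) ℝ →ₗ[ℝ] EuclideanSpace ℝ (Fin n) :=
    { toFun := fun M => WithLp.toLp 2 (fun i => -(M.mulVec g) i : Fin n → ℝ)
      map_add' := by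
        intro M N
        ext i
        simp [Matrix.add_mulVec]
        ring
      map_smul' := by
        intro c M
        ext i
        simp [Matrix.smul_mulVec] }
  have hLD : HasDerivAt (fun t : ℝ => L ((B + t • (1 : Matrix (Fin n) (Fin n) ℝ))⁻¹))
      (L (-(A⁻¹ * A⁻¹))) σ :=
    (L.toContinuousLinearMap.hasFDerivAt.comp_hasDerivAt σ hinvD')
  have hLpsig : (fun t : ℝ => L ((B + t • (1 : Matrix (Fin n) (Fin n) ℝ))⁻¹))
      = fun t : ℝ => psig B g t := by
    funext t
    show WithLp.toLp 2 (fun i => -((B + t • 1 : Matrix (Fin n) (Fin n) ℝ))⁻¹.mulVec g i) = psig B g t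
    ext i
    rfl
  have hpd : HasDerivAt (fun t : ℝ => psig B g t)
      (WithLp.toLp 2 (fun i => (A⁻¹.mulVec (A⁻¹.mulVec g)) i : Fin n → ℝ) : EuclideanSpace ℝ (Fin n)) σ := by
    rw [← hLpsig]
    convert hLD using 1
    show _ = WithLp.toLp 2 (fun i => -((-(A⁻¹ * A⁻¹)).mulVec g) i : Fin n → ℝ)
    ext i
    simp [Matrix.neg_mulVec, Matrix.mulVec_mulVec]
  set pd : EuclideanSpace ℝ (Fin n) :=
    (WithLp.toLp 2 (fun i => (A⁻¹.mulVec (A⁻¹.mulVec g)) i : Fin n → ℝ) : EuclideanSpace ℝ (Fin n)) with hpdv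
  -- inner product squared norm path
  have hh : HasDerivAt (fun t : ℝ => ⟪psig B g t, psig B g t⟫)
      (⟪p, pd⟫ + ⟪pd, p⟫) σ := hpd.inner ℝ hpd
  have hc : ⟪p, p⟫ = ‖p‖ ^ 2 := real_inner_self_eq_norm_sq p
  have hcne : ⟪p, p⟫ ≠ 0 := by rw [hc]; positivity
  have hsqrt : Real.sqrt ⟪p, p⟫ = ‖p‖ := by
    rw [hc, Real.sqrt_sq (norm_nonneg p)]
  have hs : HasDerivAt (fun t : ℝ => Real.sqrt ⟪psig B g t, psig B g t⟫)
      (1 / (2 * Real.sqrt ⟪p, p⟫) * (⟪p, pd⟫ + ⟪pd, p⟫)) σ :=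
    (Real.hasDerivAt_sqrt hcne).comp σ hh
  have hsne : Real.sqrt ⟪p, p⟫ ≠ 0 := by rw [hsqrt]; exact hpnorm.ne'
  have hfinal : HasDerivAt (fun t : ℝ => (Real.sqrt ⟪psig B g t, psig B g t⟫)⁻¹)
      (-(1 / (2 * Real.sqrt ⟪p, p⟫) * (⟪p, pd⟫ + ⟪pd, p⟫)) / Real.sqrt ⟪p, p⟫ ^ 2) σ :=
    hs.inv hsne
  -- identify functions
  have hfun : (fun t : ℝ => 1 / ‖psig B g t‖)
      = fun t : ℝ => (Real.sqrt ⟪psig B g t, psig B g t⟫)⁻¹ := by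
    funext t
    rw [one_div, real_inner_self_eq_norm_sq, Real.sqrt_sq (norm_nonneg _)]
  -- inner products as dot products
  have hinner : ∀ x y : EuclideanSpace ℝ (Fin n), ⟪x, y⟫ = (x : Fin n → ℝ) ⬝ᵥ (y : Fin n → ℝ) := by
    intro x y
    rw [PiLp.inner_apply]
    simp [dotProduct, mul_comm]
  have hpdp : ⟪pd, p⟫ = -(p ⬝ᵥ A⁻¹.mulVec (p : Fin n → ℝ)) := by
    rw [hinner]
    have : (pd : Fin n → ℝ) = -(A⁻¹.mulVec (p : Fin n → ℝ)) := by
      rw [hAinvp]; funext i; simp [hpdv]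
    rw [this]
    rw [neg_dotProduct, dotProduct_comm]
  have hppd : ⟪p, pd⟫ = -(p ⬝ᵥ A⁻¹.mulVec (p : Fin n → ℝ)) := by
    rw [real_inner_comm]; exact hpdp
  constructor
  · rw [hfun]
    convert hfinal using 1
    rw [hpdp, hppd, hsqrt]
    have h3 : ‖p‖ ^ 3 = ‖p‖ * ‖p‖ ^ 2 := by ring
    field_simp
    ring
  · intro phat hphat
    have h1 : A⁻¹.mulVec (p : Fin n → ℝ) = -phat := by
      have : A⁻¹.mulVec (A.mulVec phat) = A⁻¹.mulVec (-(p : Fin n → ℝ)) := by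
        rw [hphat]
      rw [Matrix.mulVec_mulVec, hAinvA, Matrix.one_mulVec, Matrix.mulVec_neg] at this
      rw [this, neg_neg]
    rw [h1]
    rw [dotProduct_neg]
end

section
/- Let n be a positive integer, B a symmetric positive-definite n×n real matrix, g ∈ ℝⁿ with g ≠ 0, δ > 0, and σ ≥ 0. Let p = -(B + σI)⁻¹g, and suppose B + σI = RᵀR is a Cholesky factorization (R upper triangular and invertible) and q solves Rᵀq = p. Then qᵀq = pᵀ(B + σI)⁻¹p, and the Moré–Sorensen update σ + (‖p‖₂²/‖q‖₂²)·(‖p‖₂ - δ)/δ equals the Newton iterate σ - φ(σ)/φ'(σ) for the secular function φ(σ) = 1/‖p(σ)‖₂ - 1/δ, where p(σ) = -(B + σI)⁻¹g. -/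
open Matrix

/-- Given the Cholesky factorization `B + σI = RᵀR` (`R` upper triangular and
invertible), and `q` solving `Rᵀq = p` with `p = -(B + σI)⁻¹g`, one has
`qᵀq = pᵀ(B + σI)⁻¹p`, and the Moré–Sorensen update
`σ + (‖p‖²/‖q‖²)·(‖p‖ - δ)/δ` equals the Newton iterate `σ - φ(σ)/φ'(σ)` for
the secular function `φ(σ) = 1/‖p(σ)‖₂ - 1/δ`, whose derivative is
`φ'(σ) = p(σ)ᵀ(B + σI)⁻¹p(σ)/‖p(σ)‖₂³`. -/
theorem mss_stmt9 (n : ℕ) (hn : 0 < n)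
    (B : Matrix (Fin n) (Fin n) ℝ) (hB : B.PosDef)
    (g : EuclideanSpace ℝ (Fin n)) (hg : g ≠ 0)
    (δ : ℝ) (hδ : 0 < δ) (σ : ℝ) (hσ : 0 ≤ σ)
    (R : Matrix (Fin n) (Fin n) ℝ)
    (hupper : R.BlockTriangular (id : Fin n → Fin n))
    (hRinv : IsUnit R.det)
    (hchol : B + σ • 1 = Rᵀ * R)
    (q : EuclideanSpace ℝ (Fin n))
    (hq : Rᵀ.mulVec q = psig B g σ) :
    q ⬝ᵥ q = psig B g σ ⬝ᵥ (B + σ • 1)⁻¹.mulVec (psig B g σ) ∧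
    σ + (‖psig B g σ‖ ^ 2 / ‖q‖ ^ 2) * ((‖psig B g σ‖ - δ) / δ) =
      σ - (1 / ‖psig B g σ‖ - 1 / δ) /
        ((psig B g σ ⬝ᵥ (B + σ • 1)⁻¹.mulVec (psig B g σ)) / ‖psig B g σ‖ ^ 3) := by
  set A := B + σ • (1 : Matrix (Fin n) (Fin n) ℝ) with hA
  have hRTinv : IsUnit Rᵀ.det := by rwa [det_transpose]
  have hAdet : IsUnit A.det := by rw [hchol, det_mul]; exact hRTinv.mul hRinv
  set p := psig B g σ with hp
  -- p ≠ 0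
  have hpne : p ≠ 0 := by
    intro h
    apply hg
    have h2 : A⁻¹.mulVec g = 0 := by
      have := congrArg Neg.neg h
      simpa [hp, psig, ← hA] using this
    have : A.mulVec (A⁻¹.mulVec g) = A.mulVec 0 := by rw [h2]
    rw [mulVec_mulVec, mul_nonsing_inv _ hAdet, one_mulVec, mulVec_zero] at this
    simpa using congrArg (WithLp.toLp 2) this
  have hqne : q ≠ 0 := by
    intro h
    apply hpne
    apply WithLp.ofLp_injective
    rw [← hq, h]
    funext i
    simp [mulVec]
  -- key identity
  have key : q ⬝ᵥ q = p ⬝ᵥ A⁻¹.mulVec p := by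
    have hAinv : A⁻¹ = R⁻¹ * Rᵀ⁻¹ := by rw [hchol, Matrix.mul_inv_rev]
    rw [← hq, hAinv, ← Matrix.mulVec_mulVec, Matrix.mulVec_mulVec _ Rᵀ⁻¹ Rᵀ, nonsing_inv_mul _ hRTinv, one_mulVec,
      mulVec_transpose, ← dotProduct_mulVec, mulVec_mulVec,
      mul_nonsing_inv _ hRinv, one_mulVec]
  refine ⟨key, ?_⟩
  have hnq : q ⬝ᵥ q = ‖q‖ ^ 2 := by
    rw [EuclideanSpace.norm_eq, Real.sq_sqrt (by positivity)]
    simp [dotProduct, sq]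
  have hP : ‖p‖ ≠ 0 := norm_ne_zero_iff.mpr hpne
  have hQ : ‖q‖ ≠ 0 := norm_ne_zero_iff.mpr hqne
  rw [← key, hnq]
  field_simp
  ring
end
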